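/- Let (q_n)_{n≥1} be a sequence in (0,1] and suppose there exist positive constants (c_m)_{m≥1} with c_m ≤ C_d·m^{d−1} such that c_{m∧n}^{−1}·q_m·q_n/(2d) ≤ q_{m+n} ≤ c_{m∧n}·q_m·q_n for all m,n ≥ 1. Then φ := −lim_{k→∞}(1/k)log q_k exists (as a real number), and for all k ≥ 1: q_k ≥ exp(−kφ)/(C_d·(2k)^{d−1}) and q_k ≤ 2d·C_d·(2k)^{d−1}·exp(−kφ). -/

import Mathlib

open Filter

/-- Subadditivity framework for percolation connection probabilities: if
`q_{m+n}` is comparable to `q_m q_n` up to polynomially bounded factors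
`c_{m∧n} ≤ C_d m^{d-1}` (lower bound with an extra factor `1/(2d)`), then
`φ = -lim (1/k) log q_k` exists and
`exp(-kφ)/(C_d (2k)^{d-1}) ≤ q_k ≤ 2d C_d (2k)^{d-1} exp(-kφ)` for all `k ≥ 1`. -/
theorem stmt18 (d : ℕ) (hd : 1 ≤ d) (Cd : ℝ) (hCd : 0 < Cd)
    (q : ℕ → ℝ) (hq : ∀ n, 1 ≤ n → 0 < q n ∧ q n ≤ 1)
    (c : ℕ → ℝ) (hc : ∀ m, 1 ≤ m → 0 < c m ∧ c m ≤ Cd * (m : ℝ) ^ (d - 1))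
    (hlow : ∀ m n, 1 ≤ m → 1 ≤ n →
      q m * q n / (2 * d * c (min m n)) ≤ q (m + n))
    (hup : ∀ m n, 1 ≤ m → 1 ≤ n → q (m + n) ≤ c (min m n) * q m * q n) :
    ∃ φ : ℝ,
      Tendsto (fun k : ℕ => -Real.log (q k) / k) atTop (nhds φ) ∧
      ∀ k : ℕ, 1 ≤ k →
        Real.exp (-(k : ℝ) * φ) / (Cd * (2 * (k : ℝ)) ^ (d - 1)) ≤ q k ∧
        q k ≤ 2 * d * Cd * (2 * (k : ℝ)) ^ (d - 1) * Real.exp (-(k : ℝ) * φ) := by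
  have hd1 : (1 : ℝ) ≤ (d : ℝ) := by exact_mod_cast hd
  have h2d : (0 : ℝ) < 2 * (d : ℝ) := by linarith
  have h2dCd : (0 : ℝ) < 2 * (d : ℝ) * Cd := by positivity
  set e : ℝ := ((d - 1 : ℕ) : ℝ) with he
  have he0 : 0 ≤ e := Nat.cast_nonneg _
  set Kb : ℝ := Real.log Cd with hKb
  set Ka : ℝ := Real.log (2 * (d : ℝ) * Cd) with hKa
  set b : ℕ → ℝ := fun k => if k = 0 then 0 else
    Real.log (q k) + Kb + e * Real.log (2 * (k : ℝ)) with hbdef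
  set a : ℕ → ℝ := fun k => if k = 0 then 0 else
    -Real.log (q k) + Ka + e * Real.log (2 * (k : ℝ)) with hadef
  have qpos : ∀ n, 1 ≤ n → 0 < q n := fun n hn => (hq n hn).1
  -- key arithmetic inequality on the log factors
  have key : ∀ m n : ℕ, 1 ≤ m → 1 ≤ n →
      e * Real.log ((min m n : ℕ) : ℝ) + e * Real.log (2 * ((m + n : ℕ) : ℝ)) ≤
        e * Real.log (2 * (m : ℝ)) + e * Real.log (2 * (n : ℝ)) := by
    intro m n hm hn
    have hm1 : (1 : ℝ) ≤ (m : ℝ) := by exact_mod_cast hm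
    have hn1 : (1 : ℝ) ≤ (n : ℝ) := by exact_mod_cast hn
    have hmin1 : (1 : ℝ) ≤ ((min m n : ℕ) : ℝ) := by
      exact_mod_cast le_min hm hn
    have hminpos : (0 : ℝ) < ((min m n : ℕ) : ℝ) := by linarith
    have hsum : (0 : ℝ) < 2 * ((m + n : ℕ) : ℝ) := by
      push_cast; linarith
    rw [← mul_add, ← mul_add]
    refine mul_le_mul_of_nonneg_left ?_ he0
    rw [← Real.log_mul (ne_of_gt hminpos) (ne_of_gt hsum),
      ← Real.log_mul (by linarith : (2 * (m : ℝ)) ≠ 0) (by linarith : (2 * (n : ℝ)) ≠ 0)]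
    refine Real.log_le_log (mul_pos hminpos hsum) ?_
    rw [Nat.cast_min]
    push_cast
    rcases le_total (m : ℝ) (n : ℝ) with h | h
    · rw [min_eq_left h]; nlinarith
    · rw [min_eq_right h]; nlinarith
  -- bound on log of c (min m n)
  have logc : ∀ m n : ℕ, 1 ≤ m → 1 ≤ n →
      Real.log (c (min m n)) ≤ Kb + e * Real.log ((min m n : ℕ) : ℝ) := by
    intro m n hm hn
    have hmin : 1 ≤ min m n := le_min hm hn
    have hminpos : (0 : ℝ) < ((min m n : ℕ) : ℝ) := by
      have : (1 : ℝ) ≤ ((min m n : ℕ) : ℝ) := by exact_mod_cast hmin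
      linarith
    have h := Real.log_le_log (hc _ hmin).1 (hc _ hmin).2
    rwa [Real.log_mul (ne_of_gt hCd) (pow_ne_zero _ (ne_of_gt hminpos)),
      Real.log_pow] at h
  -- subadditivity of b
  have hb : Subadditive b := by
    intro m n
    rcases Nat.eq_zero_or_pos m with rfl | hm
    · simp [hbdef]
    rcases Nat.eq_zero_or_pos n with rfl | hn
    · simp [hbdef]
    have hmn : m + n ≠ 0 := by omega
    have hqmn := qpos (m + n) (by omega)
    have hqm := qpos m hm
    have hqn := qpos n hn
    have hcmin := (hc _ (le_min hm hn)).1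
    have h1 : Real.log (q (m + n)) ≤
        Real.log (c (min m n)) + Real.log (q m) + Real.log (q n) := by
      have := Real.log_le_log hqmn (hup m n hm hn)
      rwa [Real.log_mul (ne_of_gt (mul_pos hcmin hqm)) (ne_of_gt hqn),
        Real.log_mul (ne_of_gt hcmin) (ne_of_gt hqm)] at this
    have h2 := logc m n hm hn
    have h3 := key m n hm hn
    have hmne : m ≠ 0 := by omega
    have hnne : n ≠ 0 := by omega
    simp only [hbdef, if_neg hmn, if_neg hmne, if_neg hnne]
    push_cast at h2 h3 ⊢
    linarith
  -- subadditivity of a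
  have ha : Subadditive a := by
    intro m n
    rcases Nat.eq_zero_or_pos m with rfl | hm
    · simp [hadef]
    rcases Nat.eq_zero_or_pos n with rfl | hn
    · simp [hadef]
    have hmn : m + n ≠ 0 := by omega
    have hqmn := qpos (m + n) (by omega)
    have hqm := qpos m hm
    have hqn := qpos n hn
    have hcmin := (hc _ (le_min hm hn)).1
    have h1 : Real.log (q m) + Real.log (q n)
        - (Real.log (2 * (d : ℝ)) + Real.log (c (min m n)))
        ≤ Real.log (q (m + n)) := by
      have := Real.log_le_log (div_pos (mul_pos hqm hqn) (mul_pos h2d hcmin))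
        (hlow m n hm hn)
      rwa [Real.log_div (ne_of_gt (mul_pos hqm hqn)) (ne_of_gt (mul_pos h2d hcmin)),
        Real.log_mul (ne_of_gt hqm) (ne_of_gt hqn),
        Real.log_mul (ne_of_gt h2d) (ne_of_gt hcmin)] at this
    have h2 := logc m n hm hn
    have h3 := key m n hm hn
    have hKsplit : Ka = Real.log (2 * (d : ℝ)) + Kb := by
      rw [hKa, hKb, Real.log_mul (ne_of_gt h2d) (ne_of_gt hCd)]
    have hmne : m ≠ 0 := by omega
    have hnne : n ≠ 0 := by omega
    simp only [hadef, if_neg hmn, if_neg hmne, if_neg hnne]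
    push_cast at h2 h3 ⊢
    linarith
  have ha0 : a 0 = 0 := by simp [hadef]
  have hb0 : b 0 = 0 := by simp [hbdef]
  have haN : ∀ n : ℕ, a n ≤ n * a 1 := by
    intro n
    have := ha.apply_mul_add_le n 1 0
    simpa [ha0] using this
  have hbN : ∀ n : ℕ, b n ≤ n * b 1 := by
    intro n
    have := hb.apply_mul_add_le n 1 0
    simpa [hb0] using this
  have hab : ∀ n : ℕ, 1 ≤ n → Ka + Kb ≤ a n + b n := by
    intro n hn
    have hne : n ≠ 0 := by omega
    have hlog : 0 ≤ Real.log (2 * (n : ℝ)) := by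
      apply Real.log_nonneg
      have : (1 : ℝ) ≤ (n : ℝ) := by exact_mod_cast hn
      linarith
    simp only [hadef, hbdef, if_neg hne]
    nlinarith
  -- bounded below, generically
  have bdd_aux : ∀ u v : ℕ → ℝ, (∀ n, 1 ≤ n → Ka + Kb ≤ u n + v n) →
      (∀ n : ℕ, v n ≤ n * v 1) → u 0 = 0 →
      BddBelow (Set.range fun n : ℕ => u n / n) := by
    intro u v huv hv hu0
    refine ⟨-|Ka + Kb| - |v 1|, ?_⟩
    rintro x ⟨n, rfl⟩
    rcases Nat.eq_zero_or_pos n with rfl | hn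
    · simp only [hu0, Nat.cast_zero, div_zero]
      have h1 := abs_nonneg (Ka + Kb)
      have h2 := abs_nonneg (v 1)
      linarith
    · have hn1 : (1 : ℝ) ≤ (n : ℝ) := by exact_mod_cast hn
      have hnpos : (0 : ℝ) < (n : ℝ) := by linarith
      have e1 : (-|Ka + Kb|) * n ≤ Ka + Kb := by
        have h1 := mul_le_mul_of_nonneg_left hn1 (abs_nonneg (Ka + Kb))
        have h2 := neg_abs_le (Ka + Kb)
        nlinarith
      have e2 : (-|v 1|) * n ≤ -(v 1) * n :=
        mul_le_mul_of_nonneg_right (neg_le_neg (le_abs_self (v 1))) (le_of_lt hnpos)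
      rw [le_div_iff₀ hnpos]
      have h4 := huv n hn
      have h5 := hv n
      nlinarith
  have bddb := bdd_aux b a (fun n hn => by linarith [hab n hn]) haN hb0
  have bdda := bdd_aux a b hab hbN ha0
  have hbt := hb.tendsto_lim bddb
  have hat := ha.tendsto_lim bdda
  -- the polynomial correction terms vanish
  have corr : ∀ C : ℝ, Tendsto (fun k : ℕ => (C + e * Real.log (2 * (k : ℝ))) / k)
      atTop (nhds 0) := by
    intro C
    have hlog : Tendsto (fun x : ℝ => Real.log x / x) atTop (nhds 0) :=
      Real.isLittleO_log_id_atTop.tendsto_div_nhds_zero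
    have h2k : Tendsto (fun k : ℕ => 2 * (k : ℝ)) atTop atTop :=
      (tendsto_const_mul_atTop_of_pos two_pos).mpr tendsto_natCast_atTop_atTop
    have h1 : Tendsto (fun k : ℕ => C / k +
        e * 2 * (Real.log (2 * (k : ℝ)) / (2 * (k : ℝ)))) atTop
        (nhds (0 + e * 2 * 0)) :=
      (tendsto_const_div_atTop_nhds_zero_nat C).add ((hlog.comp h2k).const_mul (e * 2))
    have h1' : Tendsto (fun k : ℕ => C / k +
        e * 2 * (Real.log (2 * (k : ℝ)) / (2 * (k : ℝ)))) atTop (nhds 0) := by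
      simpa using h1
    refine h1'.congr' ?_
    filter_upwards [eventually_ge_atTop 1] with k hk
    have hk1 : (1 : ℝ) ≤ (k : ℝ) := by exact_mod_cast hk
    have hkne : (k : ℝ) ≠ 0 := by linarith
    field_simp
  -- convergence of -log q k / k
  have hneg : Tendsto (fun k : ℕ => -Real.log (q k) / k) atTop (nhds ha.lim) := by
    have h1 : Tendsto (fun k : ℕ => a k / k - (Ka + e * Real.log (2 * (k : ℝ))) / k)
        atTop (nhds ha.lim) := by
      simpa using hat.sub (corr Ka)
    refine h1.congr' ?_
    filter_upwards [eventually_ge_atTop 1] with k hk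
    have hkne : k ≠ 0 := by omega
    rw [div_sub_div_same]
    simp only [hadef, if_neg hkne]
    ring_nf
  have hlogt : Tendsto (fun k : ℕ => Real.log (q k) / k) atTop (nhds (-ha.lim)) := by
    have := hneg.neg
    simpa [neg_div] using this
  have hbt2 : Tendsto (fun k : ℕ => b k / k) atTop (nhds (-ha.lim)) := by
    have h1 : Tendsto (fun k : ℕ => Real.log (q k) / k +
        (Kb + e * Real.log (2 * (k : ℝ))) / k) atTop (nhds (-ha.lim)) := by
      simpa using hlogt.add (corr Kb)
    refine h1.congr' ?_
    filter_upwards [eventually_ge_atTop 1] with k hk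
    have hkne : k ≠ 0 := by omega
    rw [← add_div]
    simp only [hbdef, if_neg hkne]
    ring_nf
  have hlimb : hb.lim = -ha.lim := tendsto_nhds_unique hbt hbt2
  refine ⟨ha.lim, hneg, ?_⟩
  intro k hk
  have hkne : k ≠ 0 := by omega
  have hk1 : (1 : ℝ) ≤ (k : ℝ) := by exact_mod_cast hk
  have hkpos : (0 : ℝ) < (k : ℝ) := by linarith
  have h2kpos : (0 : ℝ) < 2 * (k : ℝ) := by linarith
  have hqk := qpos k hk
  have hexp : Real.exp (e * Real.log (2 * (k : ℝ))) = (2 * (k : ℝ)) ^ (d - 1) := by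
    rw [he, ← Real.log_pow, Real.exp_log (by positivity)]
  have hbk : -ha.lim ≤ b k / k := by
    rw [← hlimb]; exact hb.lim_le_div bddb hkne
  have hak : ha.lim ≤ a k / k := ha.lim_le_div bdda hkne
  have hbk' : -((k : ℝ) * ha.lim) ≤ b k := by
    have := (le_div_iff₀ hkpos).mp hbk
    linarith
  have hak' : (k : ℝ) * ha.lim ≤ a k := by
    have := (le_div_iff₀ hkpos).mp hak
    linarith
  simp only [hbdef, if_neg hkne] at hbk'
  simp only [hadef, if_neg hkne] at hak'
  constructor
  · have hq' : Real.exp (-(k : ℝ) * ha.lim - Kb - e * Real.log (2 * (k : ℝ))) ≤ q k := by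
      rw [← Real.exp_log hqk]
      exact Real.exp_le_exp.mpr (by linarith)
    calc Real.exp (-(k : ℝ) * ha.lim) / (Cd * (2 * (k : ℝ)) ^ (d - 1))
        = Real.exp (-(k : ℝ) * ha.lim - Kb - e * Real.log (2 * (k : ℝ))) := by
          rw [Real.exp_sub, Real.exp_sub, hexp, hKb, Real.exp_log hCd, div_div]
      _ ≤ q k := hq'
  · have hq' : q k ≤ Real.exp (-(k : ℝ) * ha.lim + Ka + e * Real.log (2 * (k : ℝ))) := by
      rw [← Real.exp_log hqk]
      exact Real.exp_le_exp.mpr (by linarith)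
    calc q k ≤ Real.exp (-(k : ℝ) * ha.lim + Ka + e * Real.log (2 * (k : ℝ))) := hq'
      _ = 2 * (d : ℝ) * Cd * (2 * (k : ℝ)) ^ (d - 1) * Real.exp (-(k : ℝ) * ha.lim) := by
          rw [Real.exp_add, Real.exp_add, hexp, hKa, Real.exp_log h2dCd]
          ring
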